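/- Let m ≥ 2 and, for each k ∈ [m], let R_k denote the expected revenue (at the optimal posted price) from a bundle whose per-unit value is (1/m)Σ_{i=1}^m V_i/k with V_i i.i.d. ER. Then for any single bundle price P* ≥ 0, the total bundling revenue (1/m)·Σ_{k=1}^m P*·P[(1/m)Σ_i V_i ≥ kP*] is at most (1/m)·(9(1+log m) + 6 log m), i.e., O(log n/√n) for n = m². -/

import Mathlib

open MeasureTheory Set

section Aux

variable {Ω : Type*} [MeasurableSpace Ω] {μ : Measure Ω} [IsProbabilityMeasure μ]

lemma aux_toReal_prob_le_one {s : Set Ω} : (μ s).toReal ≤ 1 := by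
  have := ENNReal.toReal_mono ENNReal.one_ne_top (prob_le_one (μ := μ) (s := s))
  simpa using this

lemma aux_meas_gt_eq (W : Ω → ℝ) (hW : Measurable W)
    (hcdf : ∀ x : ℝ, 1 ≤ x → (μ {ω | W ω ≤ x}).toReal = 1 - 1 / x)
    {s : ℝ} (hs : 1 ≤ s) : (μ {ω | s < W ω}).toReal = 1 / s := by
  have hset : {ω | s < W ω} = {ω | W ω ≤ s}ᶜ := by ext ω; simp [not_le]
  have hms : MeasurableSet {ω | W ω ≤ s} := hW measurableSet_Iic
  rw [hset, measure_compl hms (measure_ne_top μ _), measure_univ,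
    ENNReal.toReal_sub_of_le prob_le_one ENNReal.one_ne_top, ENNReal.toReal_one,
    hcdf s hs]
  ring

lemma aux_integral_le_layer {Y : Ω → ℝ} (hInt : Integrable Y μ) (hnn : 0 ≤ᵐ[μ] Y)
    {g : ℝ → ℝ} (hg : IntegrableOn g (Ioi 0))
    (hle : ∀ s, 0 < s → (μ {ω | s < Y ω}).toReal ≤ g s) :
    ∫ ω, Y ω ∂μ ≤ ∫ s in Ioi (0:ℝ), g s := by
  rw [hInt.integral_eq_integral_meas_lt hnn]
  refine integral_mono_of_nonneg (ae_of_all _ fun s => ENNReal.toReal_nonneg) hg ?_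
  filter_upwards [ae_restrict_mem measurableSet_Ioi] with s hs
  exact hle s hs

lemma aux_trunc_moments (W : Ω → ℝ) (hW : Measurable W)
    (hsupp : ∀ᵐ ω ∂μ, 1 ≤ W ω)
    (hcdf : ∀ x : ℝ, 1 ≤ x → (μ {ω | W ω ≤ x}).toReal = 1 - 1 / x)
    {u : ℝ} (hu : 1 ≤ u) :
    MemLp (fun ω => min (max (W ω) 1) u) 2 μ ∧
    (∫ ω, min (max (W ω) 1) u ∂μ) ≤ 1 + Real.log u ∧
    (∫ ω, (min (max (W ω) 1) u) ^ 2 ∂μ) ≤ 2 * u := by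
  set X : Ω → ℝ := fun ω => min (max (W ω) 1) u with hXdef
  have hX1 : ∀ ω, 1 ≤ X ω := fun ω => le_min (le_max_right _ _) hu
  have hXu : ∀ ω, X ω ≤ u := fun ω => min_le_right _ _
  have hXm : Measurable X := (hW.max measurable_const).min measurable_const
  have hmem : MemLp X 2 μ := by
    refine MemLp.of_bound hXm.aestronglyMeasurable u (ae_of_all _ fun ω => ?_)
    rw [Real.norm_eq_abs, abs_of_nonneg (le_trans zero_le_one (hX1 ω))]
    exact hXu ω
  have hint : Integrable X μ := hmem.integrable one_le_two
  have hint2 : Integrable (fun ω => X ω ^ 2) μ := hmem.integrable_sq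
  -- tail bounds
  have htail : ∀ s : ℝ, 1 ≤ s → (μ {ω | s < X ω}).toReal ≤ 1 / s := by
    intro s hs
    have hsub : {ω | s < X ω} ⊆ {ω | s < W ω} := by
      intro ω h
      simp only [Set.mem_setOf_eq, hXdef] at h ⊢
      have h1 : s < max (W ω) 1 := lt_of_lt_of_le h (min_le_left _ _)
      rcases max_cases (W ω) 1 with ⟨he, _⟩ | ⟨he, _⟩
      · rwa [he] at h1
      · rw [he] at h1; exact absurd hs (not_le.mpr h1)
    calc (μ {ω | s < X ω}).toReal
        ≤ (μ {ω | s < W ω}).toReal :=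
          ENNReal.toReal_mono (measure_ne_top μ _) (measure_mono hsub)
      _ = 1 / s := aux_meas_gt_eq W hW hcdf hs
  -- first moment
  have hfirst : (∫ ω, X ω ∂μ) ≤ 1 + Real.log u := by
    set g : ℝ → ℝ := fun s =>
      (Ioc (0:ℝ) 1).indicator (fun _ => (1:ℝ)) s + (Ioc (1:ℝ) u).indicator (fun x => x⁻¹) s
      with hgdef
    have hig1 : Integrable ((Ioc (0:ℝ) 1).indicator (fun _ => (1:ℝ))) := by
      rw [integrable_indicator_iff measurableSet_Ioc]
      exact integrableOn_const measure_Ioc_lt_top.ne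
    have hig2 : Integrable ((Ioc (1:ℝ) u).indicator (fun x => x⁻¹)) := by
      rw [integrable_indicator_iff measurableSet_Ioc]
      have : IntervalIntegrable (fun x : ℝ => x⁻¹) volume 1 u := by
        refine intervalIntegral.intervalIntegrable_inv (f := fun x => x) ?_
          continuous_id.continuousOn
        intro x hx
        rw [Set.uIcc_of_le hu] at hx
        exact ne_of_gt (lt_of_lt_of_le zero_lt_one hx.1)
      exact this.1
    have hgint : Integrable g := hig1.add hig2
    have hle : ∀ s : ℝ, 0 < s → (μ {ω | s < X ω}).toReal ≤ g s := by
      intro s hs0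
      rcases le_or_gt s 1 with hs1 | hs1
      · have : g s = 1 := by
          simp only [hgdef, Set.indicator_apply, Set.mem_Ioc]
          rw [if_pos ⟨hs0, hs1⟩, if_neg (by intro h; exact absurd hs1 (not_le.mpr h.1))]
          ring
        rw [this]; exact aux_toReal_prob_le_one
      · rcases le_or_gt s u with hsu | hsu
        · have : g s = s⁻¹ := by
            simp only [hgdef, Set.indicator_apply, Set.mem_Ioc]
            rw [if_neg (by intro h; exact absurd h.2 (not_le.mpr hs1)),
              if_pos ⟨hs1, hsu⟩]
            ring
          rw [this, ← one_div]
          exact htail s hs1.le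
        · have hempty : {ω | s < X ω} = ∅ := by
            apply Set.eq_empty_iff_forall_notMem.mpr
            intro ω h
            exact absurd h (not_lt.mpr ((hXu ω).trans hsu.le))
          have hg0 : g s = 0 := by
            simp only [hgdef, Set.indicator_apply, Set.mem_Ioc]
            rw [if_neg (by intro h; exact absurd h.2 (not_le.mpr hs1)),
              if_neg (by intro h; exact absurd h.2 (not_le.mpr hsu))]
            ring
          rw [hempty, hg0]; simp
    have hgval : ∫ s in Ioi (0:ℝ), g s = 1 + Real.log u := by
      rw [hgdef]
      rw [integral_add (hig1.integrableOn) (hig2.integrableOn)]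
      rw [setIntegral_indicator measurableSet_Ioc, setIntegral_indicator measurableSet_Ioc]
      have h1 : Ioi (0:ℝ) ∩ Ioc 0 1 = Ioc 0 1 :=
        Set.inter_eq_right.mpr (fun x hx => hx.1)
      have h2 : Ioi (0:ℝ) ∩ Ioc 1 u = Ioc 1 u :=
        Set.inter_eq_right.mpr (fun x hx => lt_trans zero_lt_one hx.1)
      rw [h1, h2]
      have hv1 : ∫ _ in Ioc (0:ℝ) 1, (1:ℝ) = 1 := by
        simp [Real.volume_Ioc]
      have hv2 : ∫ x in Ioc (1:ℝ) u, x⁻¹ = Real.log u := by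
        rw [← intervalIntegral.integral_of_le hu, integral_inv]
        · simp
        · rw [Set.uIcc_of_le hu]
          intro h
          exact absurd h.1 (by norm_num)
      rw [hv1, hv2]
    calc (∫ ω, X ω ∂μ) ≤ ∫ s in Ioi (0:ℝ), g s :=
          aux_integral_le_layer hint (ae_of_all _ fun ω => le_trans zero_le_one (hX1 ω)) 
            hgint.integrableOn hle
      _ = 1 + Real.log u := hgval
  -- second moment
  have hsecond : (∫ ω, X ω ^ 2 ∂μ) ≤ 2 * u := by
    have hu2 : (1:ℝ) ≤ u ^ 2 := by nlinarith
    set g : ℝ → ℝ := fun s =>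
      (Ioc (0:ℝ) 1).indicator (fun _ => (1:ℝ)) s
        + (Ioc (1:ℝ) (u ^ 2)).indicator (fun x => x ^ (-(1/2) : ℝ)) s with hgdef
    have hig1 : Integrable ((Ioc (0:ℝ) 1).indicator (fun _ => (1:ℝ))) := by
      rw [integrable_indicator_iff measurableSet_Ioc]
      exact integrableOn_const measure_Ioc_lt_top.ne
    have hig2 : Integrable ((Ioc (1:ℝ) (u ^ 2)).indicator (fun x => x ^ (-(1/2) : ℝ))) := by
      rw [integrable_indicator_iff measurableSet_Ioc]
      have : IntervalIntegrable (fun x : ℝ => x ^ (-(1/2) : ℝ)) volume 1 (u ^ 2) :=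
        intervalIntegral.intervalIntegrable_rpow' (by norm_num)
      exact this.1
    have hgint : Integrable g := hig1.add hig2
    have hle : ∀ s : ℝ, 0 < s → (μ {ω | s < X ω ^ 2}).toReal ≤ g s := by
      intro s hs0
      rcases le_or_gt s 1 with hs1 | hs1
      · have : g s = 1 := by
          simp only [hgdef, Set.indicator_apply, Set.mem_Ioc]
          rw [if_pos ⟨hs0, hs1⟩, if_neg (by intro h; exact absurd hs1 (not_le.mpr h.1))]
          ring
        rw [this]; exact aux_toReal_prob_le_one
      · rcases le_or_gt s (u ^ 2) with hsu | hsu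
        · have hgs : g s = s ^ (-(1/2) : ℝ) := by
            simp only [hgdef, Set.indicator_apply, Set.mem_Ioc]
            rw [if_neg (by intro h; exact absurd h.2 (not_le.mpr hs1)),
              if_pos ⟨hs1, hsu⟩]
            ring
          have hsq1 : (1:ℝ) ≤ Real.sqrt s := by
            rw [show (1:ℝ) = Real.sqrt 1 from (Real.sqrt_one).symm]
            exact Real.sqrt_le_sqrt hs1.le
          have hsub : {ω | s < X ω ^ 2} ⊆ {ω | Real.sqrt s < X ω} := by
            intro ω h
            simp only [Set.mem_setOf_eq] at h ⊢
            exact (Real.sqrt_lt' (lt_of_lt_of_le zero_lt_one (hX1 ω))).mpr h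
          have hsub2 : {ω | Real.sqrt s < X ω} ⊆ {ω | Real.sqrt s < W ω} := by
            intro ω h
            simp only [Set.mem_setOf_eq, hXdef] at h ⊢
            have h1 : Real.sqrt s < max (W ω) 1 := lt_of_lt_of_le h (min_le_left _ _)
            rcases max_cases (W ω) 1 with ⟨he, _⟩ | ⟨he, _⟩
            · rwa [he] at h1
            · rw [he] at h1; exact absurd hsq1 (not_le.mpr h1)
          have : (μ {ω | s < X ω ^ 2}).toReal ≤ 1 / Real.sqrt s := by
            calc (μ {ω | s < X ω ^ 2}).toReal
                ≤ (μ {ω | Real.sqrt s < W ω}).toReal :=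
                  ENNReal.toReal_mono (measure_ne_top μ _)
                    (measure_mono (hsub.trans hsub2))
              _ = 1 / Real.sqrt s := aux_meas_gt_eq W hW hcdf hsq1
          rw [hgs]
          refine this.trans (le_of_eq ?_)
          rw [Real.sqrt_eq_rpow, one_div, ← Real.rpow_neg hs0.le]
        · have hempty : {ω | s < X ω ^ 2} = ∅ := by
            apply Set.eq_empty_iff_forall_notMem.mpr
            intro ω h
            simp only [Set.mem_setOf_eq] at h
            have : X ω ^ 2 ≤ u ^ 2 :=
              pow_le_pow_left₀ (le_trans zero_le_one (hX1 ω)) (hXu ω) 2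
            exact absurd h (not_lt.mpr (this.trans hsu.le))
          have hg0 : g s = 0 := by
            simp only [hgdef, Set.indicator_apply, Set.mem_Ioc]
            rw [if_neg (by intro h; exact absurd h.2 (not_le.mpr hs1)),
              if_neg (by intro h; exact absurd h.2 (not_le.mpr hsu))]
            ring
          rw [hempty, hg0]; simp
    have hgval : ∫ s in Ioi (0:ℝ), g s = 2 * u - 1 := by
      rw [hgdef]
      rw [integral_add (hig1.integrableOn) (hig2.integrableOn)]
      rw [setIntegral_indicator measurableSet_Ioc, setIntegral_indicator measurableSet_Ioc]
      have h1 : Ioi (0:ℝ) ∩ Ioc 0 1 = Ioc 0 1 :=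
        Set.inter_eq_right.mpr (fun x hx => hx.1)
      have h2 : Ioi (0:ℝ) ∩ Ioc 1 (u ^ 2) = Ioc 1 (u ^ 2) :=
        Set.inter_eq_right.mpr (fun x hx => lt_trans zero_lt_one hx.1)
      rw [h1, h2]
      have hv1 : ∫ _ in Ioc (0:ℝ) 1, (1:ℝ) = 1 := by
        simp [Real.volume_Ioc]
      have hv2 : ∫ x in Ioc (1:ℝ) (u ^ 2), x ^ (-(1/2) : ℝ) = 2 * u - 2 := by
        rw [← intervalIntegral.integral_of_le hu2, integral_rpow (Or.inl (by norm_num))]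
        have hsq : (u ^ 2 : ℝ) ^ ((-(1/2) : ℝ) + 1) = u := by
          rw [show (-(1/2) : ℝ) + 1 = 1/2 by norm_num, ← Real.sqrt_eq_rpow,
            Real.sqrt_sq (le_trans zero_le_one hu)]
        rw [hsq, Real.one_rpow]
        have hh : (-(1/2) : ℝ) + 1 = 1/2 := by norm_num
        rw [hh]
        ring
      rw [hv1, hv2]
      ring
    have hnn2 : 0 ≤ᵐ[μ] fun ω => X ω ^ 2 := ae_of_all _ fun ω => sq_nonneg _
    calc (∫ ω, X ω ^ 2 ∂μ) ≤ ∫ s in Ioi (0:ℝ), g s :=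
          aux_integral_le_layer hint2 hnn2 hgint.integrableOn hle
      _ = 2 * u - 1 := hgval
      _ ≤ 2 * u := by linarith
  exact ⟨hmem, hfirst, hsecond⟩

lemma aux_harmonic (m : ℕ) : ∑ k ∈ Finset.Icc 1 m, (1:ℝ) / k ≤ 1 + Real.log m := by
  induction m with
  | zero => simp
  | succ n ih =>
    rw [Finset.sum_Icc_succ_top (Nat.succ_le_succ (Nat.zero_le n))]
    rcases Nat.eq_zero_or_pos n with rfl | hn
    · simp
    · have hn0 : (0:ℝ) < n := by exact_mod_cast hn
      have hn1 : (0:ℝ) < (n:ℝ) + 1 := by linarith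
      have h1 : Real.log ((n:ℝ) / ((n:ℝ) + 1)) ≤ (n:ℝ) / ((n:ℝ) + 1) - 1 :=
        Real.log_le_sub_one_of_pos (by positivity)
      rw [Real.log_div (ne_of_gt hn0) (ne_of_gt hn1)] at h1
      have h2 : (n:ℝ) / ((n:ℝ) + 1) - 1 = -(1 / ((n:ℝ) + 1)) := by
        field_simp
        ring
      rw [h2] at h1
      have hcast : ((n + 1 : ℕ) : ℝ) = (n:ℝ) + 1 := by push_cast; ring
      rw [hcast]
      linarith [ih]

end Aux

set_option maxHeartbeats 1000000 in
lemma aux_tail_bound {Ω : Type*} [MeasurableSpace Ω] (μ : Measure Ω) [IsProbabilityMeasure μ]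
    (m : ℕ) (hm : 2 ≤ m) (V : Fin m → Ω → ℝ)
    (hmeas : ∀ i, Measurable (V i))
    (hindep : ProbabilityTheory.iIndepFun V μ)
    (hsupp : ∀ i, ∀ᵐ ω ∂μ, 1 ≤ V i ω)
    (hcdf : ∀ i, ∀ x : ℝ, 1 ≤ x → (μ {ω | V i ω ≤ x}).toReal = 1 - 1 / x)
    (t : ℝ) (ht : 6 * Real.log m ≤ t) :
    (μ {ω | t ≤ (1 / (m : ℝ)) * ∑ i, V i ω}).toReal ≤ 9 / t := by
  have hm2 : (2:ℝ) ≤ (m:ℝ) := by exact_mod_cast hm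
  have hm0 : (0:ℝ) < (m:ℝ) := by linarith
  have hlog2m : Real.log 2 ≤ Real.log m :=
    (Real.log_le_log_iff two_pos hm0).mpr hm2
  have hlog2 : (0.6931471803 : ℝ) < Real.log 2 := Real.log_two_gt_d9
  have hlog2' : Real.log 2 < 0.6931471808 := Real.log_two_lt_d9
  have ht4 : (4:ℝ) ≤ t := by linarith
  have ht0 : (0:ℝ) < t := by linarith
  have hlogm : Real.log m ≤ t / 6 := by linarith
  set u : ℝ := (m:ℝ) * t with hudef
  have hu1 : (1:ℝ) ≤ u := by
    have h8 : (2:ℝ) * 4 ≤ (m:ℝ) * t := mul_le_mul hm2 ht4 (by norm_num) (by linarith)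
    simp only [hudef]; linarith
  have hu0 : (0:ℝ) < u := by linarith
  set X : Fin m → Ω → ℝ := fun i ω => min (max (V i ω) 1) u with hXdef
  have hX1 : ∀ i ω, 1 ≤ X i ω := fun i ω => le_min (le_max_right _ _) hu1
  have hXfacts : ∀ i : Fin m, MemLp (X i) 2 μ ∧
      (∫ ω, X i ω ∂μ) ≤ 1 + Real.log u ∧ (∫ ω, X i ω ^ 2 ∂μ) ≤ 2 * u :=
    fun i => aux_trunc_moments (V i) (hmeas i) (hsupp i) (hcdf i) hu1
  have hXmem : ∀ i, MemLp (X i) 2 μ := fun i => (hXfacts i).1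
  have hXint : ∀ i, Integrable (X i) μ := fun i => (hXmem i).integrable one_le_two
  set S : Ω → ℝ := fun ω => ∑ i, X i ω with hSdef
  have hSsum : S = ∑ i, X i := by
    funext ω
    simp [hSdef, Finset.sum_apply]
  have hSint : Integrable S μ := by
    apply integrable_finset_sum
    exact fun i _ => hXint i
  have hSmem : MemLp S 2 μ := by
    rw [hSsum]
    exact memLp_finset_sum' _ (fun i _ => hXmem i)
  have hES : ∫ ω, S ω ∂μ = ∑ i, ∫ ω, X i ω ∂μ :=
    integral_finset_sum _ (fun i _ => hXint i)
  have hESle : ∫ ω, S ω ∂μ ≤ (m:ℝ) * (1 + Real.log u) := by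
    rw [hES]
    calc ∑ i, ∫ ω, X i ω ∂μ ≤ ∑ _i : Fin m, (1 + Real.log u) :=
          Finset.sum_le_sum (fun i _ => (hXfacts i).2.1)
      _ = (m:ℝ) * (1 + Real.log u) := by
          rw [Finset.sum_const, Finset.card_univ, Fintype.card_fin, nsmul_eq_mul]
  -- event inclusion
  have hAB : μ {ω | t ≤ (1 / (m : ℝ)) * ∑ i, V i ω} ≤ μ {ω | (m:ℝ) * t ≤ S ω} := by
    have hae : ∀ᵐ ω ∂μ, ∀ i, 1 ≤ V i ω := ae_all_iff.mpr hsupp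
    refine measure_mono_ae (hae.mono fun ω hω hA => ?_)
    change t ≤ (1 / (m : ℝ)) * ∑ i, V i ω at hA
    change (m:ℝ) * t ≤ S ω
    have hsumV : (m:ℝ) * t ≤ ∑ i, V i ω := by
      have := mul_le_mul_of_nonneg_left hA hm0.le
      rw [← mul_assoc, mul_one_div, div_self (ne_of_gt hm0), one_mul] at this
      linarith
    by_cases hcase : ∀ i, V i ω ≤ u
    · have heq : ∀ i, X i ω = V i ω := fun i => by
        simp only [hXdef]
        rw [max_eq_left (hω i), min_eq_left (hcase i)]
      calc (m:ℝ) * t ≤ ∑ i, V i ω := hsumV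
        _ = S ω := by
            simp only [hSdef]
            exact Finset.sum_congr rfl (fun i _ => (heq i).symm)
    · push_neg at hcase
      obtain ⟨j, hj⟩ := hcase
      have hXj : X j ω = u := by
        simp only [hXdef]
        rw [min_eq_right (le_trans hj.le (le_max_left _ _))]
      calc (m:ℝ) * t = u := rfl
        _ = X j ω := hXj.symm
        _ ≤ S ω := Finset.single_le_sum
            (fun i _ => le_trans zero_le_one (hX1 i ω)) (Finset.mem_univ j)
  have hABr : (μ {ω | t ≤ (1 / (m : ℝ)) * ∑ i, V i ω}).toReal
      ≤ (μ {ω | (m:ℝ) * t ≤ S ω}).toReal :=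
    ENNReal.toReal_mono (measure_ne_top μ _) hAB
  have hlogu : Real.log u = Real.log m + Real.log t :=
    Real.log_mul (ne_of_gt hm0) (ne_of_gt ht0)
  have hlog12 : Real.log 12 ≤ 4 * Real.log 2 := by
    have h1 : Real.log 12 ≤ Real.log 16 :=
      (Real.log_le_log_iff (by norm_num) (by norm_num)).mpr (by norm_num)
    have h2 : Real.log 16 = 4 * Real.log 2 := by
      rw [show (16:ℝ) = 2 ^ (4:ℕ) by norm_num, Real.log_pow]
      norm_num
    linarith
  rcases le_or_gt t 9 with h9 | h9
  · -- trivial regime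
    have : (1:ℝ) ≤ 9 / t := (le_div_iff₀ ht0).mpr (by linarith)
    exact le_trans aux_toReal_prob_le_one this
  rcases le_or_gt t 12 with h12 | h12
  · -- Markov regime
    have hSnn : 0 ≤ᵐ[μ] S := ae_of_all _ fun ω =>
      Finset.sum_nonneg (fun i _ => le_trans zero_le_one (hX1 i ω))
    have hmar := mul_meas_ge_le_integral_of_nonneg hSnn hSint ((m:ℝ) * t)
    have hEb : (m:ℝ) * t * (μ {ω | (m:ℝ) * t ≤ S ω}).toReal ≤ (m:ℝ) * (1 + Real.log u) := by
      calc (m:ℝ) * t * (μ {ω | (m:ℝ) * t ≤ S ω}).toReal ≤ ∫ ω, S ω ∂μ := hmar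
        _ ≤ (m:ℝ) * (1 + Real.log u) := hESle
    have hlogt : Real.log t ≤ Real.log 12 :=
      (Real.log_le_log_iff ht0 (by norm_num)).mpr h12
    have hnum : 1 + Real.log u ≤ 9 := by
      rw [hlogu]
      have : Real.log m ≤ 2 := by linarith
      linarith
    have hp := ENNReal.toReal_nonneg (a := μ {ω | (m:ℝ) * t ≤ S ω})
    refine hABr.trans ?_
    rw [div_eq_mul_inv]
    rw [show (μ {ω | (m:ℝ) * t ≤ S ω}).toReal
        = ((m:ℝ) * t * (μ {ω | (m:ℝ) * t ≤ S ω}).toReal) / ((m:ℝ) * t) by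
      field_simp]
    rw [div_le_iff₀ (by positivity)]
    calc (m:ℝ) * t * (μ {ω | (m:ℝ) * t ≤ S ω}).toReal
        ≤ (m:ℝ) * (1 + Real.log u) := hEb
      _ ≤ (m:ℝ) * 9 := by nlinarith
      _ = 9 * t⁻¹ * ((m:ℝ) * t) := by field_simp
  · -- Chebyshev regime
    have hlogt : Real.log t ≤ Real.log 12 + t / 12 - 1 := by
      have h1 : Real.log (t / 12) ≤ t / 12 - 1 :=
        Real.log_le_sub_one_of_pos (by positivity)
      rw [Real.log_div (ne_of_gt ht0) (by norm_num)] at h1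
      linarith
    have hnum : (1:ℝ) + Real.log u ≤ 13 / 25 * t := by
      rw [hlogu]
      linarith
    have hESle2 : ∫ ω, S ω ∂μ ≤ 13 / 25 * ((m:ℝ) * t) := by
      have h1 : (m:ℝ) * (1 + Real.log u) ≤ (m:ℝ) * (13 / 25 * t) :=
        mul_le_mul_of_nonneg_left hnum hm0.le
      have h2 : (m:ℝ) * (13 / 25 * t) = 13 / 25 * ((m:ℝ) * t) := by ring
      linarith
    set c : ℝ := (m:ℝ) * t - ∫ ω, S ω ∂μ with hcdef
    have hc : 12 / 25 * ((m:ℝ) * t) ≤ c := by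
      simp only [hcdef]
      linarith
    have hc0 : 0 < c := lt_of_lt_of_le (by positivity) hc
    have hsub : {ω | (m:ℝ) * t ≤ S ω} ⊆ {ω | c ≤ |S ω - ∫ x, S x ∂μ|} := by
      intro ω h
      simp only [Set.mem_setOf_eq] at h ⊢
      have : c ≤ S ω - ∫ x, S x ∂μ := by
        simp only [hcdef]; linarith
      exact this.trans (le_abs_self _)
    have hcheb := ProbabilityTheory.meas_ge_le_variance_div_sq hSmem hc0
    -- variance bound
    have hindepX : ProbabilityTheory.iIndepFun X μ :=
      hindep.comp (fun _ x => min (max x 1) u)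
        (fun _ => (measurable_id.max measurable_const).min measurable_const)
    have hVar : ProbabilityTheory.variance S μ = ∑ i, ProbabilityTheory.variance (X i) μ := by
      rw [hSsum]
      exact ProbabilityTheory.IndepFun.variance_sum
        (fun i _ => hXmem i)
        (fun i _ j _ hij => hindepX.indepFun hij)
    have hVarle : ProbabilityTheory.variance S μ ≤ (m:ℝ) * (2 * u) := by
      rw [hVar]
      calc ∑ i, ProbabilityTheory.variance (X i) μ ≤ ∑ _i : Fin m, (2 * u) := by
            refine Finset.sum_le_sum (fun i _ => ?_)
            have h1 := ProbabilityTheory.variance_le_expectation_sq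
              (μ := μ) (X := X i) (hXmem i).aestronglyMeasurable
            simp only [Pi.pow_apply] at h1
            exact h1.trans (hXfacts i).2.2
        _ = (m:ℝ) * (2 * u) := by
            rw [Finset.sum_const, Finset.card_univ, Fintype.card_fin, nsmul_eq_mul]
    have hchain : μ {ω | (m:ℝ) * t ≤ S ω}
        ≤ ENNReal.ofReal (ProbabilityTheory.variance S μ / c ^ 2) :=
      (measure_mono hsub).trans hcheb
    have hfin : (μ {ω | (m:ℝ) * t ≤ S ω}).toReal
        ≤ ProbabilityTheory.variance S μ / c ^ 2 := by
      have := ENNReal.toReal_mono ENNReal.ofReal_ne_top hchain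
      rwa [ENNReal.toReal_ofReal
        (div_nonneg (ProbabilityTheory.variance_nonneg S μ) (sq_nonneg _))] at this
    refine hABr.trans (hfin.trans ?_)
    have hc2 : (12 / 25 * ((m:ℝ) * t)) ^ 2 ≤ c ^ 2 :=
      pow_le_pow_left₀ (by positivity) hc 2
    have hstep : ProbabilityTheory.variance S μ / c ^ 2
        ≤ ((m:ℝ) * (2 * u)) / ((12 / 25 * ((m:ℝ) * t)) ^ 2) :=
      div_le_div₀ (by positivity) hVarle (by positivity) hc2
    refine hstep.trans ?_
    rw [div_le_div_iff₀ (by positivity) ht0]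
    simp only [hudef]
    nlinarith [sq_nonneg ((m:ℝ) * t), mul_pos (mul_pos hm0 hm0) (mul_pos ht0 ht0)]

/-- Claim 2 (item-type bundling revenue in Example 1): with `m ≥ 2` i.i.d. equal-revenue
variables `V_1, …, V_m` and the data provider revealing the group index `k` (each with
probability `1/m`), for any bundle price `P* ≥ 0` the total bundling revenue
`(1/m) Σ_{k=1}^m P* · P[(1/m) Σ_i V_i ≥ k P*]` is at most
`(1/m)(9(1 + log m) + 6 log m)`. -/
theorem item_type_bundling_revenue
    {Ω : Type*} [MeasurableSpace Ω] (μ : Measure Ω) [IsProbabilityMeasure μ]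
    (m : ℕ) (hm : 2 ≤ m) (V : Fin m → Ω → ℝ)
    (hmeas : ∀ i, Measurable (V i))
    (hindep : ProbabilityTheory.iIndepFun V μ)
    (hsupp : ∀ i, ∀ᵐ ω ∂μ, 1 ≤ V i ω)
    (hcdf : ∀ i, ∀ x : ℝ, 1 ≤ x → (μ {ω | V i ω ≤ x}).toReal = 1 - 1 / x)
    (Pstar : ℝ) (hP : 0 ≤ Pstar) :
    (1 / (m : ℝ)) * ∑ k ∈ Finset.Icc 1 m,
        Pstar * (μ {ω | (k : ℝ) * Pstar ≤ (1 / (m : ℝ)) * ∑ i, V i ω}).toReal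
      ≤ (1 / (m : ℝ)) * (9 * (1 + Real.log m) + 6 * Real.log m) := by
  classical
  have hm1 : (1:ℝ) ≤ (m:ℝ) := by exact_mod_cast le_trans one_le_two hm
  have hm0 : (0:ℝ) < (m:ℝ) := by linarith
  have hL0 : 0 ≤ Real.log m := Real.log_nonneg hm1
  rcases eq_or_lt_of_le hP with hP0 | hP0
  · rw [← hP0]
    simp only [zero_mul, mul_zero, Finset.sum_const_zero]
    positivity
  · suffices hsum : ∑ k ∈ Finset.Icc 1 m,
        Pstar * (μ {ω | (k : ℝ) * Pstar ≤ (1 / (m : ℝ)) * ∑ i, V i ω}).toReal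
        ≤ 9 * (1 + Real.log m) + 6 * Real.log m by
      exact mul_le_mul_of_nonneg_left hsum (by positivity)
    have hstep1 : ∑ k ∈ Finset.Icc 1 m,
        Pstar * (μ {ω | (k : ℝ) * Pstar ≤ (1 / (m : ℝ)) * ∑ i, V i ω}).toReal
        ≤ ∑ k ∈ Finset.Icc 1 m,
          (if (k : ℝ) * Pstar ≤ 6 * Real.log m then Pstar else 9 / (k : ℝ)) := by
      refine Finset.sum_le_sum (fun k hk => ?_)
      rw [Finset.mem_Icc] at hk
      have hk1 : (1:ℝ) ≤ (k:ℝ) := by exact_mod_cast hk.1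
      have hk0 : (0:ℝ) < (k:ℝ) := by linarith
      split_ifs with hcase
      · calc Pstar * (μ _).toReal ≤ Pstar * 1 :=
            mul_le_mul_of_nonneg_left aux_toReal_prob_le_one hP
          _ = Pstar := mul_one _
      · push_neg at hcase
        have htail := aux_tail_bound μ m hm V hmeas hindep hsupp hcdf
          ((k:ℝ) * Pstar) hcase.le
        calc Pstar * (μ {ω | (k : ℝ) * Pstar ≤ (1 / (m : ℝ)) * ∑ i, V i ω}).toReal
            ≤ Pstar * (9 / ((k:ℝ) * Pstar)) :=
              mul_le_mul_of_nonneg_left htail hP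
          _ = 9 / (k:ℝ) := by
              field_simp
    refine hstep1.trans ?_
    rw [Finset.sum_ite]
    have hpart1 : ∑ _k ∈ (Finset.Icc 1 m).filter
        (fun k => ((k : ℕ) : ℝ) * Pstar ≤ 6 * Real.log m), Pstar ≤ 6 * Real.log m := by
      set F := (Finset.Icc 1 m).filter
        (fun k => ((k : ℕ) : ℝ) * Pstar ≤ 6 * Real.log m) with hF
      set N := ⌊(6 * Real.log m) / Pstar⌋₊ with hN
      have hsubF : F ⊆ Finset.Icc 1 N := by
        intro k hk
        rw [hF, Finset.mem_filter, Finset.mem_Icc] at hk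
        rw [Finset.mem_Icc]
        refine ⟨hk.1.1, ?_⟩
        apply Nat.le_floor
        rw [le_div_iff₀ hP0]
        exact hk.2
      have hcard : (F.card : ℝ) ≤ (N : ℝ) := by
        have h := Finset.card_le_card hsubF
        rw [Nat.card_Icc] at h
        simp only [Nat.add_sub_cancel] at h
        exact_mod_cast h
      have hNle : (N : ℝ) * Pstar ≤ 6 * Real.log m := by
        have := Nat.floor_le (a := (6 * Real.log m) / Pstar) (by positivity)
        calc (N : ℝ) * Pstar ≤ ((6 * Real.log m) / Pstar) * Pstar :=
              mul_le_mul_of_nonneg_right this hP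
          _ = 6 * Real.log m := by field_simp
      rw [Finset.sum_const, nsmul_eq_mul]
      calc (F.card : ℝ) * Pstar ≤ (N : ℝ) * Pstar :=
            mul_le_mul_of_nonneg_right hcard hP
        _ ≤ 6 * Real.log m := hNle
    have hpart2 : ∑ k ∈ (Finset.Icc 1 m).filter
        (fun k => ¬ ((k : ℕ) : ℝ) * Pstar ≤ 6 * Real.log m), 9 / ((k : ℕ) : ℝ)
        ≤ 9 * (1 + Real.log m) := by
      have hsub2 : ∑ k ∈ (Finset.Icc 1 m).filter
          (fun k => ¬ ((k : ℕ) : ℝ) * Pstar ≤ 6 * Real.log m), 9 / ((k : ℕ) : ℝ)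
          ≤ ∑ k ∈ Finset.Icc 1 m, 9 / ((k : ℕ) : ℝ) := by
        apply Finset.sum_le_sum_of_subset_of_nonneg (Finset.filter_subset _ _)
        intro k hk _
        positivity
      refine hsub2.trans ?_
      have : ∑ k ∈ Finset.Icc 1 m, (9:ℝ) / (k : ℝ)
          = 9 * ∑ k ∈ Finset.Icc 1 m, (1:ℝ) / (k : ℝ) := by
        rw [Finset.mul_sum]
        exact Finset.sum_congr rfl (fun k _ => by ring)
      rw [this]
      have := aux_harmonic m
      nlinarith
    linarith
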